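/- For positive definite A, B and t ∈ [0,1], d_BW(A, A◇_t B) = t·d_BW(A,B): the Bures-Wasserstein geodesic is parametrized proportionally to arc length. -/

import Mathlib

open Matrix Filter Asymptotics
open scoped ComplexOrder

/-- The PSD square root of a matrix (0 if not PSD). -/
noncomputable def msqrt {n : ℕ} (M : Matrix (Fin n) (Fin n) ℂ) : Matrix (Fin n) (Fin n) ℂ :=
  letI := Classical.propDecidable M.PosSemidef
  if h : M.PosSemidef then
    (h.1.eigenvectorUnitary : Matrix (Fin n) (Fin n) ℂ) *
      diagonal (((↑) : ℝ → ℂ) ∘ (√·) ∘ h.1.eigenvalues) *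
      (star h.1.eigenvectorUnitary : Matrix (Fin n) (Fin n) ℂ)
  else 0

/-- `(AB)^{1/2} := A^{1/2} (A^{1/2} B A^{1/2})^{1/2} A^{-1/2}`. -/
noncomputable def sqAB {n : ℕ} (A B : Matrix (Fin n) (Fin n) ℂ) : Matrix (Fin n) (Fin n) ℂ :=
  msqrt A * msqrt (msqrt A * B * msqrt A) * (msqrt A)⁻¹

/-- Bures-Wasserstein geodesic `A ◇_t B`. -/
noncomputable def geo {n : ℕ} (A B : Matrix (Fin n) (Fin n) ℂ) (t : ℝ) : Matrix (Fin n) (Fin n) ℂ :=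
  ((1 - t)^2 : ℝ) • A + (t^2 : ℝ) • B + (t * (1 - t) : ℝ) • (sqAB A B + (sqAB A B)ᴴ)

/-- Bures-Wasserstein distance. -/
noncomputable def dBW {n : ℕ} (A B : Matrix (Fin n) (Fin n) ℂ) : ℝ :=
  Real.sqrt ((Matrix.trace A).re + (Matrix.trace B).re -
    2 * (Matrix.trace (msqrt (msqrt A * B * msqrt A))).re)

open scoped MatrixOrder in
lemma msqrt_eq_cfc {n : ℕ} {M : Matrix (Fin n) (Fin n) ℂ} (h : M.PosSemidef) :
    msqrt M = CFC.sqrt M := by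
  rw [msqrt, dif_pos h, CFC.sqrt_eq_cfc, cfc_nnreal_eq_real _ M h.nonneg, h.1.cfc_eq]
  simp only [IsHermitian.cfc, Unitary.conjStarAlgAut_apply]
  congr 3
  funext x
  simp [Real.coe_sqrt, Real.coe_toNNReal', Function.comp, h.eigenvalues_nonneg]

lemma rsmul_psd {n : ℕ} {M : Matrix (Fin n) (Fin n) ℂ} (h : M.PosSemidef) {c : ℝ}
    (hc : 0 ≤ c) : (c • M).PosSemidef := by
  constructor
  · unfold Matrix.IsHermitian
    rw [conjTranspose_smul, star_trivial, h.1.eq]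
  · intro x
    exact (h.smul hc).2 x

open scoped MatrixOrder in
theorem stmt8 {n : ℕ} (A B : Matrix (Fin n) (Fin n) ℂ)
    (hA : A.PosDef) (hB : B.PosDef) (t : ℝ) (ht0 : 0 ≤ t) (ht1 : t ≤ 1) :
    dBW A (geo A B t) = t * dBW A B := by
  have ht1' : 0 ≤ 1 - t := by linarith
  set S := msqrt A with hSdef
  have hmsA : msqrt A = S := rfl
  have hSps : S.PosSemidef := by
    rw [hSdef, msqrt_eq_cfc hA.posSemidef]; exact (CFC.sqrt_nonneg A).posSemidef
  have hSh : Sᴴ = S := hSps.1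
  have hSS : S * S = A := by
    rw [hSdef, msqrt_eq_cfc hA.posSemidef]; exact CFC.sqrt_mul_sqrt_self A hA.posSemidef.nonneg
  have hdet : IsUnit S.det := by
    have h1 : S.det * S.det = A.det := by rw [← det_mul, hSS]
    have h2 : A.det ≠ 0 := hA.det_pos.ne'
    have : S.det ≠ 0 := fun h => h2 (by rw [← h1, h, mul_zero])
    exact this.isUnit
  have hS1 : S⁻¹ * S = 1 := nonsing_inv_mul S hdet
  have hS2 : S * S⁻¹ = 1 := mul_nonsing_inv S hdet
  have hC : (S * B * S).PosSemidef := by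
    have := hB.posSemidef.conjTranspose_mul_mul_same S
    rwa [hSh] at this
  set R := msqrt (S * B * S) with hRdef
  have hmsC : msqrt (S * B * S) = R := rfl
  have hRps : R.PosSemidef := by
    rw [hRdef, msqrt_eq_cfc hC]; exact (CFC.sqrt_nonneg _).posSemidef
  have hRh : Rᴴ = R := hRps.1
  have hRR : R * R = S * B * S := by
    rw [hRdef, msqrt_eq_cfc hC]; exact CFC.sqrt_mul_sqrt_self _ hC.nonneg
  have hsqAB : sqAB A B = S * R * S⁻¹ := by rw [sqAB, hmsA, hmsC]
  have hconj : (S * R * S⁻¹)ᴴ = S⁻¹ * R * S := by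
    rw [conjTranspose_mul, conjTranspose_mul, conjTranspose_nonsing_inv, hSh, hRh, mul_assoc]
  set M : Matrix (Fin n) (Fin n) ℂ := ((1 - t : ℝ)) • A + (t : ℝ) • R with hMdef
  have hMps : M.PosSemidef := (rsmul_psd hA.posSemidef ht1').add (rsmul_psd hRps ht0)
  have e1 : S * A * S = A * A := by rw [← hSS]; noncomm_ring
  have e2 : S * B * S = R * R := hRR.symm
  have e3 : S * (S * R * S⁻¹) * S = A * R := by
    rw [show S * (S * R * S⁻¹) * S = (S * S) * R * (S⁻¹ * S) from by noncomm_ring, hS1, hSS,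
      mul_one]
  have e4 : S * (S⁻¹ * R * S) * S = R * A := by
    rw [show S * (S⁻¹ * R * S) * S = (S * S⁻¹) * R * (S * S) from by noncomm_ring, hS2, hSS,
      one_mul]
  have key : S * geo A B t * S = M * M := by
    rw [geo, hsqAB, hconj, hMdef]
    simp only [Matrix.add_mul, Matrix.mul_add, Matrix.smul_mul, Matrix.mul_smul, smul_smul,
      smul_add]
    rw [e1, e2, e3, e4]
    match_scalars <;> ring
  have hM2 : (S * geo A B t * S).PosSemidef := by
    rw [key, ← sq]
    exact hMps.pow 2
  have hMsq : msqrt (S * geo A B t * S) = M := by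
    rw [msqrt_eq_cfc hM2]
    exact (CFC.sqrt_eq_iff _ _ hM2.nonneg hMps.nonneg).mpr key.symm
  -- trace computations
  have htrM : (Matrix.trace M).re = (1 - t) * (Matrix.trace A).re + t * (Matrix.trace R).re := by
    rw [hMdef, trace_add, trace_smul, trace_smul, Complex.add_re, Complex.smul_re,
      Complex.smul_re]
    simp only [smul_eq_mul]
    try ring
  have htr1 : Matrix.trace (S * R * S⁻¹) = Matrix.trace R := by
    rw [trace_mul_cycle, hS1, one_mul]
  have htr2 : Matrix.trace (S⁻¹ * R * S) = Matrix.trace R := by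
    rw [trace_mul_cycle, hS2, one_mul]
  have htrgeo : (Matrix.trace (geo A B t)).re =
      (1 - t)^2 * (Matrix.trace A).re + t^2 * (Matrix.trace B).re +
      (t * (1 - t)) * (2 * (Matrix.trace R).re) := by
    rw [geo, hsqAB, hconj, trace_add, trace_add, trace_smul, trace_smul, trace_smul, trace_add,
      htr1, htr2, Complex.add_re, Complex.add_re, Complex.smul_re, Complex.smul_re,
      Complex.smul_re, Complex.add_re]
    simp only [smul_eq_mul]
    try ring
  rw [dBW, dBW, hmsA, hMsq, hmsC, htrgeo, htrM]
  rw [show (Matrix.trace A).re + ((1 - t)^2 * (Matrix.trace A).re + t^2 * (Matrix.trace B).re +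
      (t * (1 - t)) * (2 * (Matrix.trace R).re)) -
      2 * ((1 - t) * (Matrix.trace A).re + t * (Matrix.trace R).re) =
      t^2 * ((Matrix.trace A).re + (Matrix.trace B).re - 2 * (Matrix.trace R).re) from by ring]
  rw [Real.sqrt_mul (sq_nonneg t), Real.sqrt_sq ht0]
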